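/- Let K_{SP} and K_P be generalized number lattices that are self dual relative to involutive permutations p(·) of S ⊎ P (with p(S)=S, p(P)=P, p²=identity) and p|_P(·) respectively, meaning K^d equals the image of K under the permutation of coordinates. Then K_{SP} ↔ K_P is self dual relative to p|_S(·). -/

import Mathlib

/-- A generalized number lattice. -/
def IsGenNumLat {M : Type*} [AddCommGroup M] [Module ℚ M] (K : Set M) : Prop :=
  ∃ (n k : ℕ) (b : Fin n → M) (c : Fin k → M),
    K = {x | ∃ (l : Fin n → ℤ) (m : Fin k → ℚ),
      x = (∑ i, (l i : ℚ) • b i) + ∑ j, m j • c j}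

/-- The dual of a collection of vectors. -/
def dualLat {X : Type*} [Fintype X] (K : Set (X → ℚ)) : Set (X → ℚ) :=
  {g | ∀ f ∈ K, ∃ z : ℤ, ∑ x, f x * g x = (z : ℚ)}

namespace Stmt14Aux
open Finset Function

universe u

lemma zsmul_cast {M : Type*} [AddCommGroup M] [Module ℚ M] (t : ℤ) (v : M) :
    (t : ℚ) • v = t • v := Int.cast_smul_eq_zsmul ℚ t v

variable {X : Type u} [Fintype X]

def dotL (f : X → ℚ) : (X → ℚ) →ₗ[ℚ] ℚ where
  toFun g := ∑ x, f x * g x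
  map_add' g h := by simp [mul_add, Finset.sum_add_distrib]
  map_smul' t g := by simp [smul_eq_mul, Finset.mul_sum, mul_left_comm]

lemma dotL_apply (f g : X → ℚ) : dotL f g = ∑ x, f x * g x := rfl

lemma dotL_comm (f g : X → ℚ) : dotL f g = dotL g f := by
  simp [dotL_apply, mul_comm]

lemma dotL_add_left (f g h : X → ℚ) : dotL (f + g) h = dotL f h + dotL g h := by
  rw [dotL_comm, map_add, dotL_comm h f, dotL_comm h g]

lemma dotL_sub_left (f g h : X → ℚ) : dotL (f - g) h = dotL f h - dotL g h := by
  rw [dotL_comm, map_sub, dotL_comm h f, dotL_comm h g]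

lemma dotL_smul_left (t : ℚ) (f h : X → ℚ) : dotL (t • f) h = t * dotL f h := by
  rw [dotL_comm, map_smul, dotL_comm h f]; rfl

lemma dotL_sum_left {ι : Type*} (s : Finset ι) (u : ι → X → ℚ) (h : X → ℚ) :
    dotL (∑ i ∈ s, u i) h = ∑ i ∈ s, dotL (u i) h := by
  rw [dotL_comm, map_sum]
  exact Finset.sum_congr rfl fun i _ => dotL_comm h (u i)

lemma dotL_zero_left (h : X → ℚ) : dotL 0 h = 0 := by
  rw [dotL_comm, map_zero]

lemma mem_dualLat {K : Set (X → ℚ)} {g : X → ℚ} :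
    g ∈ dualLat K ↔ ∀ f ∈ K, ∃ z : ℤ, dotL f g = (z : ℚ) := Iff.rfl

lemma eq_zero_of_forall_int (r : ℚ) (h : ∀ t : ℚ, ∃ z : ℤ, t * r = z) : r = 0 := by
  by_contra hr
  obtain ⟨z, hz⟩ := h (1 / (2 * r))
  have h2 : (1 : ℚ) / 2 = z := by rw [← hz]; field_simp
  have h3 : (2 * z : ℤ) = 1 := by
    have : (2 * z : ℚ) = 1 := by rw [← h2]; ring
    exact_mod_cast this
  omega

section DecEq
variable [DecidableEq X]

def vecOf (ψ : Module.Dual ℚ (X → ℚ)) : X → ℚ := fun x => ψ (fun y => if x = y then 1 else 0)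

lemma dotL_vecOf (f : X → ℚ) (ψ : Module.Dual ℚ (X → ℚ)) : dotL f (vecOf ψ) = ψ f := by
  conv_rhs => rw [pi_eq_sum_univ f, map_sum]
  simp [dotL_apply, vecOf, smul_eq_mul]

lemma mem_of_forall_dot_eq (V : Submodule ℚ (X → ℚ)) (y : X → ℚ)
    (h : ∀ u : X → ℚ, (∀ v ∈ V, dotL v u = 0) → dotL y u = 0) : y ∈ V := by
  by_contra hy
  have hq : V.mkQ y ≠ 0 := by
    simpa [Submodule.mkQ_apply, Submodule.Quotient.mk_eq_zero] using hy
  obtain ⟨χ, hχ⟩ : ∃ χ : Module.Dual ℚ ((X → ℚ) ⧸ V), χ (V.mkQ y) ≠ 0 := by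
    by_contra hc; push_neg at hc
    exact hq ((Module.forall_dual_apply_eq_zero_iff ℚ _).mp hc)
  set ψ := χ.comp V.mkQ with hψ
  have h1 : ∀ v ∈ V, dotL v (vecOf ψ) = 0 := fun v hv => by
    rw [dotL_vecOf]
    simp [hψ, Submodule.mkQ_apply, (Submodule.Quotient.mk_eq_zero V).mpr hv]
  have h2 := h (vecOf ψ) h1
  rw [dotL_vecOf] at h2
  exact hχ (by simpa [hψ] using h2)

end DecEq

/-- `StructForm e V` : lattice generated by `e` plus the subspace `V`. -/
def StructForm {I : Type*} [Fintype I] (e : I → (X → ℚ)) (V : Submodule ℚ (X → ℚ)) :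
    Set (X → ℚ) :=
  {x | ∃ l : I → ℤ, x - ∑ i, (l i : ℚ) • e i ∈ V}

lemma isGNL_structForm {I : Type*} [Fintype I] (e : I → X → ℚ) (V : Submodule ℚ (X → ℚ)) :
    IsGenNumLat (StructForm e V) := by
  obtain ⟨k, c, hc⟩ : ∃ (k : ℕ) (c : Fin k → X → ℚ), Submodule.span ℚ (Set.range c) = V :=
    Submodule.fg_iff_exists_fin_generating_family.mp (IsNoetherian.noetherian V)
  refine ⟨Fintype.card I, k, e ∘ (Fintype.equivFin I).symm, c, ?_⟩
  ext x
  constructor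
  · rintro ⟨l, hl⟩
    rw [← hc] at hl
    obtain ⟨m, hm⟩ := (Submodule.mem_span_range_iff_exists_fun ℚ).mp hl
    refine ⟨l ∘ (Fintype.equivFin I).symm, m, ?_⟩
    have hre : ∑ j, ((l ∘ (Fintype.equivFin I).symm) j : ℚ) • (e ∘ (Fintype.equivFin I).symm) j
        = ∑ i, (l i : ℚ) • e i :=
      Equiv.sum_comp (Fintype.equivFin I).symm (fun i => (l i : ℚ) • e i)
    rw [hre, hm]
    abel
  · rintro ⟨l, m, rfl⟩
    refine ⟨l ∘ (Fintype.equivFin I), ?_⟩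
    have hre : ∑ i, ((l ∘ (Fintype.equivFin I)) i : ℚ) • e i
        = ∑ j, (l j : ℚ) • e ((Fintype.equivFin I).symm j) := by
      rw [← Equiv.sum_comp (Fintype.equivFin I)
        (fun j => (l j : ℚ) • e ((Fintype.equivFin I).symm j))]
      simp
    rw [hre]
    have : (∑ i, (l i : ℚ) • (e ∘ (Fintype.equivFin I).symm) i) + ∑ j, m j • c j
        - ∑ j, (l j : ℚ) • e ((Fintype.equivFin I).symm j) = ∑ j, m j • c j := by
      simp only [Function.comp_apply]; abel
    rw [this, ← hc]
    exact Submodule.sum_mem _ fun j _ =>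
      Submodule.smul_mem _ _ (Submodule.subset_span (Set.mem_range_self j))

lemma struct_of {K : Set (X → ℚ)} (h : IsGenNumLat K) :
    ∃ (I : Type u) (_ : Fintype I) (e : I → X → ℚ) (V : Submodule ℚ (X → ℚ)) (g : I → X → ℚ),
      K = StructForm e V ∧ (∀ j, ∀ v ∈ V, dotL v (g j) = 0) ∧
      (∀ i, dotL (e i) (g i) = 1) ∧ (∀ i j, i ≠ j → dotL (e i) (g j) = 0) := by
  classical
  obtain ⟨n, k, b, c, rfl⟩ := h
  set V : Submodule ℚ (X → ℚ) := Submodule.span ℚ (Set.range c) with hV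
  set Λ : Submodule ℤ (X → ℚ) := Submodule.span ℤ (Set.range b) with hΛ
  set q : (X → ℚ) →ₗ[ℚ] ((X → ℚ) ⧸ V) := V.mkQ with hq
  set qZ : (X → ℚ) →ₗ[ℤ] ((X → ℚ) ⧸ V) := q.restrictScalars ℤ with hqZ
  set Q : Submodule ℤ ((X → ℚ) ⧸ V) := Λ.map qZ with hQ
  have hQfg : Q.FG := (Submodule.fg_span (Set.finite_range b)).map qZ
  haveI : Module.Finite ℤ Q := Module.Finite.iff_fg.mpr (by simpa using hQfg)
  haveI : IsAddTorsionFree ((X → ℚ) ⧸ V) := ⟨fun n hn a b hab => smul_right_injective _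
    (show ((n : ℚ)) ≠ 0 by exact_mod_cast hn) (by simpa [Nat.cast_smul_eq_nsmul] using hab)⟩
  set β := Module.Free.chooseBasis ℤ Q with hβ
  set I := Module.Free.ChooseBasisIndex ℤ Q with hI
  have hlift : ∀ i : I, ∃ y, y ∈ Λ ∧ qZ y = (β i : (X → ℚ) ⧸ V) := by
    intro i
    obtain ⟨y, hy, hqy⟩ := Submodule.mem_map.mp (β i).2
    exact ⟨y, hy, hqy⟩
  choose e he1 he2 using hlift
  set w : I → ((X → ℚ) ⧸ V) := fun i => ((β i : Q) : (X → ℚ) ⧸ V) with hw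
  have hindZ : LinearIndependent ℤ w :=
    β.linearIndependent.map' Q.subtype (Submodule.ker_subtype Q)
  have hind : LinearIndependent ℚ w := (LinearIndependent.iff_fractionRing ℤ ℚ).mp hindZ
  set bs : Module.Basis I ℚ (Submodule.span ℚ (Set.range w)) := Module.Basis.span hind with hbs
  obtain ⟨U', hcompl⟩ := Submodule.exists_isCompl (Submodule.span ℚ (Set.range w))
  set proj := Submodule.linearProjOfIsCompl _ _ hcompl with hproj
  set φ : I → Module.Dual ℚ ((X → ℚ) ⧸ V) := fun j => (bs.coord j).comp proj with hφdef
  have hφ : ∀ i j, φ j (w i) = if i = j then 1 else 0 := by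
    intro i j
    have hmem : w i ∈ Submodule.span ℚ (Set.range w) :=
      Submodule.subset_span (Set.mem_range_self i)
    have h1 : proj (w i) = ⟨w i, hmem⟩ := by
      have := Submodule.linearProjOfIsCompl_apply_left hcompl ⟨w i, hmem⟩
      exact this
    have h2 : (⟨w i, hmem⟩ : Submodule.span ℚ (Set.range w)) = bs i :=
      (Module.Basis.span_apply hind i).symm
    simp only [hφdef, LinearMap.comp_apply, h1, h2, Module.Basis.coord_apply, Module.Basis.repr_self]
    rw [Finsupp.single_apply]
  set g : I → (X → ℚ) := fun j => vecOf ((φ j).comp q) with hg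
  have hgq : ∀ (f : X → ℚ) j, dotL f (g j) = φ j (q f) := fun f j => dotL_vecOf f _
  refine ⟨I, inferInstance, e, V, g, ?_, ?_, ?_, ?_⟩
  · ext x
    constructor
    · rintro ⟨l, m, rfl⟩
      set sb : X → ℚ := ∑ i, (l i : ℚ) • b i with hsb
      have hsbΛ : sb ∈ Λ := by
        rw [hsb]
        refine Submodule.sum_mem _ fun i _ => ?_
        rw [zsmul_cast]
        exact Submodule.smul_mem _ _ (Submodule.subset_span (Set.mem_range_self i))
      have hsbQ : qZ sb ∈ Q := Submodule.mem_map_of_mem hsbΛ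
      set l' : I → ℤ := fun i => β.repr ⟨qZ sb, hsbQ⟩ i with hl'
      refine ⟨l', ?_⟩
      have hVc : (∑ j, m j • c j) ∈ V :=
        Submodule.sum_mem _ fun j _ =>
          Submodule.smul_mem _ _ (Submodule.subset_span (Set.mem_range_self j))
      have key : q (sb + ∑ j, m j • c j - ∑ i, (l' i : ℚ) • e i) = 0 := by
        rw [map_sub, map_add]
        have h0 : q (∑ j, m j • c j) = 0 := (Submodule.Quotient.mk_eq_zero V).mpr hVc
        have h1 : q (∑ i, (l' i : ℚ) • e i) = qZ sb := by
          rw [map_sum]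
          have h2 : ∀ i, q ((l' i : ℚ) • e i) = l' i • w i := by
            intro i
            rw [map_smul]
            have h5 : q (e i) = w i := he2 i
            rw [h5, zsmul_cast]
          rw [Finset.sum_congr rfl fun i _ => h2 i]
          have h3 : ∑ i, l' i • w i = ((∑ i, l' i • β i : Q) : (X → ℚ) ⧸ V) := by
            push_cast
            rfl
          rw [h3]
          have h4 : (∑ i, l' i • β i : Q) = ⟨qZ sb, hsbQ⟩ := by
            simp only [hl']
            exact β.sum_repr ⟨qZ sb, hsbQ⟩
          rw [h4]
        rw [h0, h1, add_zero]
        have h6 : qZ sb = q sb := rfl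
        rw [h6, sub_self]
      exact (Submodule.Quotient.mk_eq_zero V).mp key
    · rintro ⟨l, hl⟩
      have hse : (∑ i, (l i : ℚ) • e i) ∈ Λ := by
        refine Submodule.sum_mem _ fun i _ => ?_
        rw [zsmul_cast]
        exact Submodule.smul_mem _ _ (he1 i)
      rw [hΛ] at hse
      obtain ⟨l'', hl''⟩ := (Submodule.mem_span_range_iff_exists_fun ℤ).mp hse
      have hl2 : x - ∑ i, (l i : ℚ) • e i ∈ Submodule.span ℚ (Set.range c) := hl
      obtain ⟨m, hm⟩ := (Submodule.mem_span_range_iff_exists_fun ℚ).mp hl2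
      refine ⟨l'', m, ?_⟩
      have h7 : ∑ i, (l'' i : ℚ) • b i = ∑ i, (l i : ℚ) • e i := by
        rw [Finset.sum_congr rfl fun i _ => zsmul_cast (l'' i) (b i)]
        exact hl''
      rw [h7, hm]
      abel
  · intro j v hv
    rw [hgq v j]
    have h8 : q v = 0 := (Submodule.Quotient.mk_eq_zero V).mpr hv
    rw [h8, map_zero]
  · intro i
    rw [hgq (e i) i]
    have h9 : q (e i) = w i := he2 i
    rw [h9, hφ]
    simp
  · intro i j hij
    rw [hgq (e i) j]
    have h9 : q (e i) = w i := he2 i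
    rw [h9, hφ]
    simp [hij]

lemma zero_mem_dualLat (K : Set (X → ℚ)) : 0 ∈ dualLat K := fun f _ => ⟨0, by simp⟩

lemma subset_dualdual (K : Set (X → ℚ)) : K ⊆ dualLat (dualLat K) := by
  intro f hf g hg
  obtain ⟨z, hz⟩ := hg f hf
  refine ⟨z, ?_⟩
  rw [show ∑ x, g x * f x = ∑ x, f x * g x from Finset.sum_congr rfl fun x _ => mul_comm _ _]
  exact hz

lemma neg_mem_dualLat {K : Set (X → ℚ)} {g : X → ℚ} (hg : g ∈ dualLat K) :
    -g ∈ dualLat K := by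
  intro f hf
  obtain ⟨z, hz⟩ := hg f hf
  refine ⟨-z, ?_⟩
  push_cast
  rw [← hz]
  simp [mul_neg]

lemma coeff_eq {I : Type*} [Fintype I] {e g : I → X → ℚ} {V : Submodule ℚ (X → ℚ)}
    (hgV : ∀ j, ∀ v ∈ V, dotL v (g j) = 0)
    (hd : ∀ i, dotL (e i) (g i) = 1) (ho : ∀ i j, i ≠ j → dotL (e i) (g j) = 0)
    {x : X → ℚ} {l : I → ℤ} (hx : x - ∑ i, (l i : ℚ) • e i ∈ V) (j : I) :
    dotL x (g j) = l j := by
  classical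
  have h0 := hgV j _ hx
  rw [dotL_sub_left, dotL_sum_left] at h0
  have h1 : ∀ i ∈ Finset.univ, dotL ((l i : ℚ) • e i) (g j) = if i = j then (l i : ℚ) else 0 := by
    intro i _
    rw [dotL_smul_left]
    by_cases h : i = j
    · subst h; rw [hd]; simp
    · rw [ho i j h]; simp [h]
  rw [Finset.sum_congr rfl h1, Finset.sum_ite_eq' Finset.univ j] at h0
  simp only [Finset.mem_univ, if_true] at h0
  linarith

lemma struct_mem_dual {I : Type*} [Fintype I] {e g : I → X → ℚ} {V : Submodule ℚ (X → ℚ)}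
    (hgV : ∀ j, ∀ v ∈ V, dotL v (g j) = 0)
    (hd : ∀ i, dotL (e i) (g i) = 1) (ho : ∀ i j, i ≠ j → dotL (e i) (g j) = 0)
    (j : I) : g j ∈ dualLat (StructForm e V) := by
  rintro x ⟨l, hl⟩
  exact ⟨l j, by rw [← dotL_apply]; exact_mod_cast coeff_eq hgV hd ho hl j⟩

lemma dualdual_struct [DecidableEq X] {I : Type*} [Fintype I] {e g : I → X → ℚ}
    {V : Submodule ℚ (X → ℚ)}
    (hgV : ∀ j, ∀ v ∈ V, dotL v (g j) = 0)
    (hd : ∀ i, dotL (e i) (g i) = 1) (ho : ∀ i j, i ≠ j → dotL (e i) (g j) = 0) :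
    dualLat (dualLat (StructForm e V)) = StructForm e V := by
  classical
  apply Set.Subset.antisymm _ (subset_dualdual _)
  intro y hy
  have hz : ∀ j, ∃ z : ℤ, dotL (g j) y = z := fun j => hy (g j) (struct_mem_dual hgV hd ho j)
  choose z hz using hz
  refine ⟨z, ?_⟩
  apply mem_of_forall_dot_eq
  intro u hu
  set u' := u - ∑ i, dotL (e i) u • g i with hu'
  have hu'V : ∀ v ∈ V, dotL v u' = 0 := by
    intro v hv
    rw [hu', map_sub, map_sum, hu v hv]
    simp [map_smul, smul_eq_mul, fun i => hgV i v hv]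
  have hu'e : ∀ i, dotL (e i) u' = 0 := by
    intro i
    rw [hu', map_sub, map_sum]
    have h1 : ∀ j ∈ Finset.univ, dotL (e i) (dotL (e j) u • g j)
        = if j = i then dotL (e i) u else 0 := by
      intro j _
      rw [map_smul, smul_eq_mul]
      by_cases h : j = i
      · subst h; rw [hd]; simp
      · rw [ho i j (Ne.symm h)]; simp [h]
    rw [Finset.sum_congr rfl h1, Finset.sum_ite_eq' Finset.univ i]
    simp
  have hmemdual : ∀ t : ℚ, t • u' ∈ dualLat (StructForm e V) := by
    rintro t x ⟨l, hl⟩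
    refine ⟨0, ?_⟩
    rw [← dotL_apply, map_smul, smul_eq_mul]
    have hx0 : dotL x u' = 0 := by
      have hxsplit : x = (∑ i, (l i : ℚ) • e i) + (x - ∑ i, (l i : ℚ) • e i) := by abel
      rw [show dotL x u' = dotL ((∑ i, (l i : ℚ) • e i) + (x - ∑ i, (l i : ℚ) • e i)) u' by
        rw [← hxsplit]]
      rw [dotL_add_left, dotL_sum_left]
      simp only [dotL_smul_left]
      rw [hu'V _ hl]
      simp [fun i => hu'e i]
    rw [hx0]
    simp
  have h0 : dotL u' y = 0 := by
    apply eq_zero_of_forall_int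
    intro t
    obtain ⟨z', hz'⟩ := hy (t • u') (hmemdual t)
    exact ⟨z', by rw [← dotL_apply, dotL_smul_left] at hz'; exact hz'⟩
  set y' := y - ∑ j, (z j : ℚ) • e j with hy'
  have hy'g : ∀ i, dotL y' (g i) = 0 := by
    intro i
    rw [hy', dotL_sub_left, dotL_sum_left]
    have h1 : ∀ j ∈ Finset.univ, dotL ((z j : ℚ) • e j) (g i)
        = if j = i then (z i : ℚ) else 0 := by
      intro j _
      rw [dotL_smul_left]
      by_cases h : j = i
      · subst h; rw [hd]; simp
      · rw [ho j i h]; simp [h]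
    rw [Finset.sum_congr rfl h1, Finset.sum_ite_eq' Finset.univ i]
    have h2 : dotL y (g i) = z i := by rw [dotL_comm]; exact hz i
    simp [h2]
  have hy'u' : dotL y' u' = 0 := by
    rw [hy', dotL_sub_left, dotL_sum_left]
    have h2 : dotL y u' = 0 := by rw [dotL_comm]; exact h0
    simp only [dotL_smul_left]
    rw [h2]
    simp [fun j => hu'e j]
  have hudecomp : u = u' + ∑ i, dotL (e i) u • g i := by rw [hu']; abel
  rw [show dotL y' u = dotL y' (u' + ∑ i, dotL (e i) u • g i) by rw [← hudecomp]]
  rw [map_add, map_sum, hy'u']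
  simp [map_smul, smul_eq_mul, fun i => hy'g i]

lemma dual_struct {I : Type*} [Fintype I] {e g : I → X → ℚ} {V : Submodule ℚ (X → ℚ)}
    (hgV : ∀ j, ∀ v ∈ V, dotL v (g j) = 0)
    (hd : ∀ i, dotL (e i) (g i) = 1) (ho : ∀ i j, i ≠ j → dotL (e i) (g j) = 0) :
    ∃ U : Submodule ℚ (X → ℚ), dualLat (StructForm e V) = StructForm g U := by
  classical
  set U : Submodule ℚ (X → ℚ) :=
    (⨅ i : I, LinearMap.ker (dotL (e i))) ⊓ (⨅ v : V, LinearMap.ker (dotL (v : X → ℚ)))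
    with hU
  have hUmem : ∀ u, u ∈ U ↔ (∀ i, dotL (e i) u = 0) ∧ ∀ v ∈ V, dotL v u = 0 := by
    intro u
    simp [hU, Submodule.mem_inf, Submodule.mem_iInf, LinearMap.mem_ker, Subtype.forall]
  refine ⟨U, ?_⟩
  ext u
  constructor
  · intro hu
    have he : ∀ i, e i ∈ StructForm e V := by
      intro i
      refine ⟨fun i' => if i' = i then 1 else 0, ?_⟩
      have h1 : ∑ i', (((if i' = i then 1 else 0 : ℤ)) : ℚ) • e i' = e i := by
        rw [Finset.sum_congr rfl (fun i' (_ : i' ∈ Finset.univ) =>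
          show (((if i' = i then 1 else 0 : ℤ)) : ℚ) • e i' = if i' = i then e i' else 0 by
            split <;> simp),
          Finset.sum_ite_eq' Finset.univ i]
        simp
      show e i - ∑ i', (((if i' = i then 1 else 0 : ℤ)) : ℚ) • e i' ∈ V
      rw [h1, sub_self]
      exact V.zero_mem
    have hz : ∀ i, ∃ z : ℤ, dotL (e i) u = z := fun i => hu (e i) (he i)
    choose z hz using hz
    have hV0 : ∀ v ∈ V, dotL v u = 0 := by
      intro v hv
      apply eq_zero_of_forall_int
      intro t
      have hmem : t • v ∈ StructForm e V := ⟨0, by simpa using Submodule.smul_mem _ t hv⟩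
      obtain ⟨z', hz'⟩ := hu _ hmem
      exact ⟨z', by rw [← dotL_apply, dotL_smul_left] at hz'; exact hz'⟩
    refine ⟨z, (hUmem _).mpr ⟨?_, ?_⟩⟩
    · intro i
      rw [map_sub, map_sum, hz i]
      have h1 : ∀ j ∈ Finset.univ, dotL (e i) ((z j : ℚ) • g j)
          = if j = i then (z i : ℚ) else 0 := by
        intro j _
        rw [map_smul, smul_eq_mul]
        by_cases h : j = i
        · subst h; rw [hd]; simp
        · rw [ho i j (Ne.symm h)]; simp [h]
      rw [Finset.sum_congr rfl h1, Finset.sum_ite_eq' Finset.univ i]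
      simp
    · intro v hv
      rw [map_sub, map_sum, hV0 v hv]
      simp [map_smul, smul_eq_mul, fun j => hgV j v hv]
  · rintro ⟨l, hl⟩ x ⟨l', hl'⟩
    set u'' := u - ∑ j, (l j : ℚ) • g j with hu''def
    have hu'' := (hUmem u'').mp hl
    refine ⟨∑ i, l' i * l i, ?_⟩
    rw [← dotL_apply]
    have hdecomp : u = (∑ j, (l j : ℚ) • g j) + u'' := by rw [hu''def]; abel
    rw [show dotL x u = dotL x ((∑ j, (l j : ℚ) • g j) + u'') by rw [← hdecomp]]
    rw [map_add, map_sum]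
    have h1 : dotL x u'' = 0 := by
      have hxsplit : x = (∑ i, (l' i : ℚ) • e i) + (x - ∑ i, (l' i : ℚ) • e i) := by abel
      rw [show dotL x u'' = dotL ((∑ i, (l' i : ℚ) • e i) + (x - ∑ i, (l' i : ℚ) • e i)) u'' by
        rw [← hxsplit]]
      rw [dotL_add_left, dotL_sum_left]
      simp only [dotL_smul_left]
      rw [hu''.2 _ hl']
      simp [fun i => hu''.1 i]
    rw [h1, add_zero]
    have h2 : ∀ j ∈ Finset.univ, dotL x ((l j : ℚ) • g j) = (l j : ℚ) * (l' j : ℚ) := by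
      intro j _
      rw [map_smul, smul_eq_mul, coeff_eq hgV hd ho hl' j]
    rw [Finset.sum_congr rfl h2]
    push_cast
    exact Finset.sum_congr rfl fun j _ => mul_comm _ _
def sumSet (K L : Set (X → ℚ)) : Set (X → ℚ) := {x | ∃ u ∈ K, ∃ w ∈ L, x = u + w}

omit [Fintype X] in
lemma zero_mem_GNL {K : Set (X → ℚ)} (h : IsGenNumLat K) : 0 ∈ K := by
  obtain ⟨n, k, b, c, rfl⟩ := h
  exact ⟨0, 0, by simp⟩

lemma isGNL_sum {K L : Set (X → ℚ)} (hK : IsGenNumLat K) (hL : IsGenNumLat L) :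
    IsGenNumLat (sumSet K L) := by
  obtain ⟨I, _, e, V, g, rfl, -, -, -⟩ := struct_of hK
  obtain ⟨I', _, e', V', g', rfl, -, -, -⟩ := struct_of hL
  have key : sumSet (StructForm e V) (StructForm e' V') = StructForm (Sum.elim e e') (V ⊔ V') := by
    ext x
    constructor
    · rintro ⟨u, ⟨l, hl⟩, w, ⟨l', hl'⟩, rfl⟩
      refine ⟨Sum.elim l l', ?_⟩
      rw [Fintype.sum_sum_type]
      simp only [Sum.elim_inl, Sum.elim_inr]
      have h1 : u + w - ((∑ i, (l i : ℚ) • e i) + ∑ j, (l' j : ℚ) • e' j)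
          = (u - ∑ i, (l i : ℚ) • e i) + (w - ∑ j, (l' j : ℚ) • e' j) := by abel
      rw [h1]
      exact Submodule.add_mem_sup hl hl'
    · rintro ⟨l, hl⟩
      rw [Fintype.sum_sum_type] at hl
      simp only [Sum.elim_inl, Sum.elim_inr] at hl
      obtain ⟨v, hv, v', hv', hsum⟩ := Submodule.mem_sup.mp hl
      refine ⟨(∑ i, ((l (Sum.inl i) : ℚ)) • e i) + v, ⟨fun i => l (Sum.inl i), by simpa using hv⟩,
        (∑ j, ((l (Sum.inr j) : ℚ)) • e' j) + v', ⟨fun j => l (Sum.inr j), by simpa using hv'⟩, ?_⟩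
      · have h2 : (∑ i, ((l (Sum.inl i) : ℚ)) • e i) + v
            + ((∑ j, ((l (Sum.inr j) : ℚ)) • e' j) + v')
            = ((∑ i, ((l (Sum.inl i) : ℚ)) • e i) + ∑ j, ((l (Sum.inr j) : ℚ)) • e' j)
              + (v + v') := by abel
        rw [h2, hsum]
        abel
  rw [key]
  exact isGNL_structForm _ _

lemma dualLat_sumSet {C D : Set (X → ℚ)} (hC : 0 ∈ C) (hD : 0 ∈ D) :
    dualLat (sumSet C D) = dualLat C ∩ dualLat D := by
  ext u
  constructor
  · intro hu
    constructor
    · intro f hf; exact hu f ⟨f, hf, 0, hD, (add_zero f).symm⟩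
    · intro f hf; exact hu f ⟨0, hC, f, hf, (zero_add f).symm⟩
  · rintro ⟨h1, h2⟩ x ⟨a, ha, b, hb, rfl⟩
    obtain ⟨z1, hz1⟩ := h1 a ha
    obtain ⟨z2, hz2⟩ := h2 b hb
    refine ⟨z1 + z2, ?_⟩
    rw [← dotL_apply, dotL_add_left, dotL_apply, dotL_apply, hz1, hz2]
    push_cast
    ring

lemma dualdual_GNL [DecidableEq X] {K : Set (X → ℚ)} (h : IsGenNumLat K) :
    dualLat (dualLat K) = K := by
  obtain ⟨I, _, e, V, g, rfl, hgV, hd, ho⟩ := struct_of h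
  exact dualdual_struct hgV hd ho

lemma dual_GNL {K : Set (X → ℚ)} (h : IsGenNumLat K) : IsGenNumLat (dualLat K) := by
  obtain ⟨I, _, e, V, g, rfl, hgV, hd, ho⟩ := struct_of h
  obtain ⟨U, hU⟩ := dual_struct hgV hd ho
  rw [hU]
  exact isGNL_structForm _ _

lemma dual_inter [DecidableEq X] {A B : Set (X → ℚ)} (hA : IsGenNumLat A) (hB : IsGenNumLat B) :
    dualLat (A ∩ B) = sumSet (dualLat A) (dualLat B) := by
  have h1 : A ∩ B = dualLat (sumSet (dualLat A) (dualLat B)) := by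
    rw [dualLat_sumSet (zero_mem_dualLat A) (zero_mem_dualLat B), dualdual_GNL hA, dualdual_GNL hB]
  rw [h1, dualdual_GNL (isGNL_sum (dual_GNL hA) (dual_GNL hB))]
end Stmt14Aux

open Stmt14Aux

/-- Self duality is preserved by matched composition: if `K_SP` and `K_P` are
self dual relative to the involutive permutation `p` (preserving `S` and `P`,
given by its components `pS`, `pP`), then `K_SP ↔ K_P` is self dual relative
to `p|_S`. -/
theorem stmt14 {S P : Type*} [Fintype S] [Fintype P]
    (KSP : Set (S ⊕ P → ℚ)) (KP : Set (P → ℚ))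
    (pS : Equiv.Perm S) (pP : Equiv.Perm P)
    (hpS : ∀ s, pS (pS s) = s) (hpP : ∀ p, pP (pP p) = p)
    (h1 : IsGenNumLat KSP) (h2 : IsGenNumLat KP)
    (hsd1 : dualLat KSP = {g | ∃ f ∈ KSP, g = f ∘ Sum.map pS pP})
    (hsd2 : dualLat KP = {g | ∃ f ∈ KP, g = f ∘ pP}) :
    dualLat {fS | ∃ h ∈ KP, Sum.elim fS h ∈ KSP} =
      {g | ∃ f ∈ {fS | ∃ h ∈ KP, Sum.elim fS h ∈ KSP}, g = f ∘ pS} := by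
  classical
  apply Set.Subset.antisymm
  · -- hard direction
    intro g hg
    obtain ⟨I, _, e, V, gP, hKP_eq, -, -, -⟩ := struct_of h2
    set resL : ((S ⊕ P) → ℚ) →ₗ[ℚ] (P → ℚ) := LinearMap.funLeft ℚ ℚ Sum.inr with hres
    set B : Set ((S ⊕ P) → ℚ) := {x | (fun p => x (Sum.inr p)) ∈ KP} with hB
    have hBeq : B = StructForm (fun i => Sum.elim (0 : S → ℚ) (e i)) (V.comap resL) := by
      ext x
      have hcomp : ∀ l : I → ℤ,
          resL (x - ∑ i, (l i : ℚ) • Sum.elim (0 : S → ℚ) (e i))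
            = (fun p => x (Sum.inr p)) - ∑ i, (l i : ℚ) • e i := by
        intro l
        funext p
        simp [hres, LinearMap.funLeft_apply, Function.comp, Finset.sum_apply,
          Pi.smul_apply, Pi.sub_apply, smul_eq_mul]
      constructor
      · intro hx
        rw [hB, Set.mem_setOf_eq, hKP_eq] at hx
        obtain ⟨l, hl⟩ := hx
        refine ⟨l, ?_⟩
        rw [Submodule.mem_comap, hcomp l]
        exact hl
      · rintro ⟨l, hl⟩
        rw [Submodule.mem_comap, hcomp l] at hl
        rw [hB, Set.mem_setOf_eq, hKP_eq]
        exact ⟨l, hl⟩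
    have hBgnl : IsGenNumLat B := by rw [hBeq]; exact isGNL_structForm _ _
    have hdualM : dualLat (KSP ∩ B) = sumSet (dualLat KSP) (dualLat B) :=
      dual_inter h1 hBgnl
    have hmem : Sum.elim g 0 ∈ dualLat (KSP ∩ B) := by
      rintro x ⟨hx1, hx2⟩
      have hxC : (fun s => x (Sum.inl s)) ∈ {fS | ∃ h ∈ KP, Sum.elim fS h ∈ KSP} := by
        refine ⟨fun p => x (Sum.inr p), hx2, ?_⟩
        have hsplit : Sum.elim (fun s => x (Sum.inl s)) (fun p => x (Sum.inr p)) = x := by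
          funext y; cases y <;> rfl
        rw [hsplit]; exact hx1
      obtain ⟨z, hz⟩ := hg _ hxC
      refine ⟨z, ?_⟩
      rw [Fintype.sum_sum_type]
      simpa using hz
    rw [hdualM] at hmem
    obtain ⟨u, hu, w, hw, huw⟩ := hmem
    have hu_app : ∀ y, u y = Sum.elim g 0 y - w y := by
      intro y
      have := congrFun huw y
      simp only [Pi.add_apply] at this
      linarith
    have hwl : ∀ s, w (Sum.inl s) = 0 := by
      intro s
      apply eq_zero_of_forall_int
      intro t
      have hxB : (fun y : S ⊕ P => if y = Sum.inl s then t else 0) ∈ B := by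
        rw [hB, Set.mem_setOf_eq]
        have hz0 : (fun p : P => if (Sum.inr p : S ⊕ P) = Sum.inl s then t else 0) = 0 := by
          funext p; simp
        rw [hz0]
        exact zero_mem_GNL h2
      obtain ⟨z, hz⟩ := hw _ hxB
      refine ⟨z, ?_⟩
      rw [← hz,
        Finset.sum_congr rfl (fun y (_ : y ∈ Finset.univ) =>
          show (if y = Sum.inl s then t else 0) * w y = if y = Sum.inl s then t * w y else 0 by
            split <;> simp),
        Finset.sum_ite_eq' Finset.univ (Sum.inl s) (fun y => t * w y)]
      simp
    have hwr : (fun p => w (Sum.inr p)) ∈ dualLat KP := by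
      intro h hh
      have hxB : Sum.elim (0 : S → ℚ) h ∈ B := by
        rw [hB, Set.mem_setOf_eq]
        simpa using hh
      obtain ⟨z, hz⟩ := hw _ hxB
      refine ⟨z, ?_⟩
      rw [← hz, Fintype.sum_sum_type]
      simp
    rw [hsd1] at hu
    obtain ⟨f0, hf0, hf0eq⟩ := hu
    have hnegw : (fun p => - w (Sum.inr (pP p))) ∈ KP := by
      have h3 : -(fun p => w (Sum.inr p)) ∈ dualLat KP := neg_mem_dualLat hwr
      rw [hsd2] at h3
      obtain ⟨f1, hf1, hf1eq⟩ := h3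
      have h4 : (fun p => - w (Sum.inr (pP p))) = f1 := by
        funext p
        have h5 := congrFun hf1eq (pP p)
        simp only [Pi.neg_apply, Function.comp_apply, hpP p] at h5
        simpa using h5
      rw [h4]; exact hf1
    have hf0' : f0 = Sum.elim (fun s => g (pS s)) (fun p => - w (Sum.inr (pP p))) := by
      funext y
      cases y with
      | inl s =>
        have h5 := congrFun hf0eq (Sum.inl (pS s))
        simp only [Function.comp_apply, Sum.map_inl, hpS s] at h5
        rw [hu_app (Sum.inl (pS s))] at h5
        simp only [Sum.elim_inl, hwl (pS s)] at h5 ⊢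
        rw [← h5]; ring
      | inr p =>
        have h5 := congrFun hf0eq (Sum.inr (pP p))
        simp only [Function.comp_apply, Sum.map_inr, hpP p] at h5
        rw [hu_app (Sum.inr (pP p))] at h5
        simp only [Sum.elim_inr, Pi.zero_apply] at h5 ⊢
        rw [← h5]; ring
    refine ⟨fun s => g (pS s), ⟨fun p => - w (Sum.inr (pP p)), hnegw, ?_⟩, ?_⟩
    · rw [← hf0']; exact hf0
    · funext s
      simp [Function.comp_apply, hpS s]
  · -- easy direction
    rintro g' ⟨f, ⟨h, hh, hfh⟩, rfl⟩
    rintro f' ⟨h', hh', hf'h'⟩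
    have hu : (Sum.elim f h) ∘ Sum.map pS pP ∈ dualLat KSP := by
      rw [hsd1]; exact ⟨_, hfh, rfl⟩
    obtain ⟨z1, hz1⟩ := hu _ hf'h'
    have hh2 : h ∘ pP ∈ dualLat KP := by
      rw [hsd2]; exact ⟨h, hh, rfl⟩
    obtain ⟨z2, hz2⟩ := hh2 h' hh'
    refine ⟨z1 - z2, ?_⟩
    rw [Fintype.sum_sum_type] at hz1
    simp only [Sum.elim_inl, Sum.elim_inr, Function.comp_apply, Sum.map_inl, Sum.map_inr] at hz1
    simp only [Function.comp_apply] at hz2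
    push_cast
    simp only [Function.comp_apply]
    linarith
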